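/- Let G be a ternary semigroup, X a real normed space, and φ : G × G × G → [0,∞). Suppose f : G → X satisfies ‖f([xyz]) − f(x) − f(y) − f(z)‖ ≤ φ(x,y,z) for all x, y, z ∈ G. Then for every x ∈ G and all nonnegative integers m < n, ‖3^{-n} f(x^{3^n}) − 3^{-m} f(x^{3^m})‖ ≤ (1/3)·∑_{k=m}^{n-1} 3^{-k} φ(x^{3^k}, x^{3^k}, x^{3^k}). -/
import Mathlib


/-- Iterated cube: `cubeIter op x n = x^{3^n}` where `x³ = op x x x`. -/
def cubeIter {G : Type*} (op : G → G → G → G) (x : G) : ℕ → G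
  | 0 => x
  | n + 1 => op (cubeIter op x n) (cubeIter op x n) (cubeIter op x n)

theorem stmt_4 {G : Type*} (op : G → G → G → G)
    (assoc : ∀ x y z u v : G,
      op (op x y z) u v = op x (op y z u) v ∧
      op x (op y z u) v = op x y (op z u v))
    {X : Type*} [NormedAddCommGroup X] [NormedSpace ℝ X]
    (φ : G → G → G → ℝ) (hφ : ∀ x y z, 0 ≤ φ x y z)
    (f : G → X)
    (hf : ∀ x y z : G, ‖f (op x y z) - f x - f y - f z‖ ≤ φ x y z) :
    ∀ (x : G) (m n : ℕ), m < n →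
      ‖((1 : ℝ) / 3) ^ n • f (cubeIter op x n) - ((1 : ℝ) / 3) ^ m • f (cubeIter op x m)‖ ≤
        (1 / 3) * ∑ k ∈ Finset.Ico m n,
          ((1 : ℝ) / 3) ^ k * φ (cubeIter op x k) (cubeIter op x k) (cubeIter op x k) := by
  intro x m
  have step : ∀ k : ℕ,
      ‖((1 : ℝ) / 3) ^ (k + 1) • f (cubeIter op x (k + 1)) -
        ((1 : ℝ) / 3) ^ k • f (cubeIter op x k)‖ ≤
      (1 / 3) * (((1 : ℝ) / 3) ^ k *
        φ (cubeIter op x k) (cubeIter op x k) (cubeIter op x k)) := by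
    intro k
    set c := cubeIter op x k with hc
    have h1 : ((1 : ℝ) / 3) ^ (k + 1) • f (op c c c) - ((1 : ℝ) / 3) ^ k • f c =
        ((1 : ℝ) / 3) ^ (k + 1) • (f (op c c c) - f c - f c - f c) := by
      rw [smul_sub, smul_sub, smul_sub]
      have h3 : ((1 : ℝ) / 3) ^ k • f c = ((1 : ℝ) / 3) ^ (k + 1) • f c +
          ((1 : ℝ) / 3) ^ (k + 1) • f c + ((1 : ℝ) / 3) ^ (k + 1) • f c := by
        rw [← add_smul, ← add_smul]
        congr 1
        ring
      rw [h3]; abel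
    show ‖((1 : ℝ) / 3) ^ (k + 1) • f (op c c c) - ((1 : ℝ) / 3) ^ k • f c‖ ≤ _
    rw [h1, norm_smul]
    have : ‖((1 : ℝ) / 3) ^ (k + 1)‖ = (1 / 3) * ((1 : ℝ) / 3) ^ k := by
      rw [Real.norm_eq_abs, abs_of_pos (by positivity)]; ring
    rw [this, mul_assoc]
    gcongr
    exact hf c c c
  intro n hmn
  induction n, hmn using Nat.le_induction with
  | base =>
    rw [show Finset.Ico m m.succ = {m} by rw [Nat.Ico_succ_singleton], Finset.sum_singleton]
    exact step m
  | succ n hn ih =>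
    have hsplit : ∑ k ∈ Finset.Ico m (n + 1),
        ((1 : ℝ) / 3) ^ k * φ (cubeIter op x k) (cubeIter op x k) (cubeIter op x k) =
        (∑ k ∈ Finset.Ico m n,
          ((1 : ℝ) / 3) ^ k * φ (cubeIter op x k) (cubeIter op x k) (cubeIter op x k)) +
        ((1 : ℝ) / 3) ^ n * φ (cubeIter op x n) (cubeIter op x n) (cubeIter op x n) := by
      rw [Finset.sum_Ico_succ_top (le_of_lt hn)]
    rw [hsplit, mul_add]
    calc ‖((1 : ℝ) / 3) ^ (n + 1) • f (cubeIter op x (n + 1)) -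
          ((1 : ℝ) / 3) ^ m • f (cubeIter op x m)‖
        ≤ ‖((1 : ℝ) / 3) ^ n • f (cubeIter op x n) -
            ((1 : ℝ) / 3) ^ m • f (cubeIter op x m)‖ +
          ‖((1 : ℝ) / 3) ^ (n + 1) • f (cubeIter op x (n + 1)) -
            ((1 : ℝ) / 3) ^ n • f (cubeIter op x n)‖ := by
          have := norm_add_le
            (((1 : ℝ) / 3) ^ n • f (cubeIter op x n) - ((1 : ℝ) / 3) ^ m • f (cubeIter op x m))
            (((1 : ℝ) / 3) ^ (n + 1) • f (cubeIter op x (n + 1)) -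
              ((1 : ℝ) / 3) ^ n • f (cubeIter op x n))
          simpa [sub_add_sub_cancel'] using this
      _ ≤ _ := add_le_add ih (step n)
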